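/- For every integer k ≥ 0: the class C_k of graphs whose vertex set can be partitioned into k cliques is closed under induced minors; the class G_k is closed under induced minors; and every graph in G_k is K_{2,k+1}-induced-minor-free. -/

import Mathlib

open SimpleGraph

namespace PaperSep

variable {V : Type} {W : Type}

/-- There is a walk from `a` to `b` in `G` all of whose vertices avoid the set `S`. -/
def ConnAvoid (G : SimpleGraph V) (S : Set V) (a b : V) : Prop :=
  ∃ p : G.Walk a b, ∀ v ∈ p.support, v ∉ S

/-- `S` is an `(a,b)`-separator of `G`. -/
def IsSep (G : SimpleGraph V) (a b : V) (S : Set V) : Prop :=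
  a ∉ S ∧ b ∉ S ∧ ¬ ConnAvoid G S a b

/-- `S` is a minimal `(a,b)`-separator of `G`. -/
def IsMinSep (G : SimpleGraph V) (a b : V) (S : Set V) : Prop :=
  IsSep G a b S ∧ ∀ T ⊂ S, ¬ IsSep G a b T

/-- `S` is a minimal separator of `G`. -/
def IsMinimalSeparator (G : SimpleGraph V) (S : Set V) : Prop :=
  ∃ a b : V, a ≠ b ∧ ¬ G.Adj a b ∧ IsMinSep G a b S

/-- `K` is a cutset of `G`, i.e. `G − K` is disconnected. -/
def IsCutset (G : SimpleGraph V) (K : Set V) : Prop :=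
  ∃ a b : V, a ∉ K ∧ b ∉ K ∧ ¬ ConnAvoid G K a b

/-- `K` is a minimal cutset of `G`. -/
def IsMinimalCutset (G : SimpleGraph V) (K : Set V) : Prop :=
  IsCutset G K ∧ ∀ T ⊂ K, ¬ IsCutset G T

/-- A class of finite graphs. -/
def GraphClass : Type 1 :=
  ∀ (α : Type) [Finite α], SimpleGraph α → Prop

/-- A class is hereditary if it is closed under isomorphism and induced subgraphs. -/
def Hereditary (C : GraphClass) : Prop :=
  ∀ (α : Type) [Finite α] (G : SimpleGraph α) (β : Type) [Finite β] (H : SimpleGraph β)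
    (s : Set α), Nonempty (H ≃g G.induce s) → C α G → C β H

/-- `G ∈ 𝒢_C` : every minimal separator of `G` induces a graph in `C`. -/
def MemGC (C : GraphClass) {α : Type} [Finite α] (G : SimpleGraph α) : Prop :=
  ∀ S : Set α, IsMinimalSeparator G S → C ↥S (G.induce S)

/-- The class `𝒢_C`. -/
def GCclass (C : GraphClass) : GraphClass :=
  fun α inst G => @MemGC C α inst G

/-- `S` is a union of `k` (possibly empty) cliques of `G`. -/
def UnionOfCliques (G : SimpleGraph V) (k : ℕ) (S : Set V) : Prop :=
  ∃ f : Fin k → Set V, (∀ i, G.IsClique (f i)) ∧ S = ⋃ i, f i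

/-- `G ∈ 𝒢_k` : every minimal separator of `G` is a union of `k` cliques. -/
def MemGk (k : ℕ) (G : SimpleGraph V) : Prop :=
  ∀ S : Set V, IsMinimalSeparator G S → UnionOfCliques G k S

/-- The class `𝒢_k`. -/
def Gkclass (k : ℕ) : GraphClass := fun _ _ G => MemGk k G

/-- The class `𝒞_k` of graphs whose vertex set is a union of `k` cliques. -/
def Ckclass (k : ℕ) : GraphClass := fun _ _ G => UnionOfCliques G k Set.univ

/-- An induced minor model of `H` in `G`. -/
def IsIMModel (G : SimpleGraph V) (H : SimpleGraph W) (X : W → Set V) : Prop :=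
  (∀ w, (X w).Nonempty) ∧
  (∀ u w : W, u ≠ w → Disjoint (X u) (X w)) ∧
  (∀ w, (G.induce (X w)).Connected) ∧
  (∀ u w : W, u ≠ w → (H.Adj u w ↔ ∃ a ∈ X u, ∃ b ∈ X w, G.Adj a b))

/-- `H` is an induced minor of `G`. -/
def IsInducedMinor (H : SimpleGraph W) (G : SimpleGraph V) : Prop :=
  ∃ X : W → Set V, IsIMModel G H X

/-- The class `C` is closed under induced minors. -/
def IMClosed (C : GraphClass) : Prop :=
  ∀ (α : Type) [Finite α] (G : SimpleGraph α) (β : Type) [Finite β] (H : SimpleGraph β),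
    C α G → IsInducedMinor H G → C β H

/-- The class `C` is closed under the addition of edges. -/
def EdgeAddClosed (C : GraphClass) : Prop :=
  ∀ (α : Type) [Finite α] (G : SimpleGraph α) (a b : α), a ≠ b → ¬ G.Adj a b →
    C α G → C α (G ⊔ SimpleGraph.edge a b)

/-- `G ∈ ℳ_C` : `G ∉ C` but every proper induced minor of `G` is in `C`.
(For finite graphs, the proper induced minors of `G` are exactly the induced minors of `G`
not isomorphic to `G`.) -/
def MemMC (C : GraphClass) {α : Type} [Finite α] (G : SimpleGraph α) : Prop :=
  ¬ C α G ∧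
  ∀ (β : Type) [Finite β] (H : SimpleGraph β),
    IsInducedMinor H G → IsEmpty (H ≃g G) → C β H

/-- The complete join of two graphs. -/
def join (G : SimpleGraph V) (H : SimpleGraph W) : SimpleGraph (V ⊕ W) :=
  SimpleGraph.fromRel (fun x y =>
    match x, y with
    | Sum.inl a, Sum.inl b => G.Adj a b
    | Sum.inr a, Sum.inr b => H.Adj a b
    | _, _ => True)

/-- The class `C` is closed under the addition of universal vertices (up to isomorphism). -/
def UnivAddClosed (C : GraphClass) : Prop :=
  ∀ (α : Type) [Finite α] (G : SimpleGraph α) (β : Type) [Finite β] (H : SimpleGraph β),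
    C α G → Nonempty (H ≃g join (⊥ : SimpleGraph (Fin 1)) G) → C β H

/-- `G` has a universal vertex. -/
def HasUniversalVertex (G : SimpleGraph V) : Prop :=
  ∃ v : V, ∀ w : V, w ≠ v → G.Adj v w



/-- `G` is a theta: two nonadjacent vertices joined by three internally disjoint induced
paths of length at least two, with no other vertices or edges
(equivalently, a subdivision of `K_{2,3}`). -/
def IsTheta (G : SimpleGraph V) : Prop :=
  ∃ (a b : V) (P₁ P₂ P₃ : G.Walk a b),
    a ≠ b ∧
    P₁.IsPath ∧ P₂.IsPath ∧ P₃.IsPath ∧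
    2 ≤ P₁.length ∧ 2 ≤ P₂.length ∧ 2 ≤ P₃.length ∧
    (∀ v : V, v ∈ P₁.support → v ∈ P₂.support → v = a ∨ v = b) ∧
    (∀ v : V, v ∈ P₁.support → v ∈ P₃.support → v = a ∨ v = b) ∧
    (∀ v : V, v ∈ P₂.support → v ∈ P₃.support → v = a ∨ v = b) ∧
    (∀ v : V, v ∈ P₁.support ∨ v ∈ P₂.support ∨ v ∈ P₃.support) ∧
    (∀ u v : V, G.Adj u v ↔
      s(u, v) ∈ P₁.edges ∨ s(u, v) ∈ P₂.edges ∨ s(u, v) ∈ P₃.edges)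

/-- `G` is a pyramid: an apex `a` joined to a triangle `b₁b₂b₃` by three paths sharing only
`a`, at least two of which have length at least two, with no other vertices or edges. -/
def IsPyramid (G : SimpleGraph V) : Prop :=
  ∃ (a b₁ b₂ b₃ : V) (P₁ : G.Walk a b₁) (P₂ : G.Walk a b₂) (P₃ : G.Walk a b₃),
    G.Adj b₁ b₂ ∧ G.Adj b₁ b₃ ∧ G.Adj b₂ b₃ ∧
    P₁.IsPath ∧ P₂.IsPath ∧ P₃.IsPath ∧
    1 ≤ P₁.length ∧ 1 ≤ P₂.length ∧ 1 ≤ P₃.length ∧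
    ((2 ≤ P₁.length ∧ 2 ≤ P₂.length) ∨ (2 ≤ P₁.length ∧ 2 ≤ P₃.length) ∨
      (2 ≤ P₂.length ∧ 2 ≤ P₃.length)) ∧
    (∀ v : V, v ∈ P₁.support → v ∈ P₂.support → v = a) ∧
    (∀ v : V, v ∈ P₁.support → v ∈ P₃.support → v = a) ∧
    (∀ v : V, v ∈ P₂.support → v ∈ P₃.support → v = a) ∧
    (∀ v : V, v ∈ P₁.support ∨ v ∈ P₂.support ∨ v ∈ P₃.support) ∧
    (∀ u v : V, G.Adj u v ↔
      s(u, v) ∈ P₁.edges ∨ s(u, v) ∈ P₂.edges ∨ s(u, v) ∈ P₃.edges ∨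
      s(u, v) = s(b₁, b₂) ∨ s(u, v) = s(b₁, b₃) ∨ s(u, v) = s(b₂, b₃))

/-- `G` is a prism: two disjoint triangles joined by three pairwise disjoint paths, with no
other vertices or edges. -/
def IsPrism (G : SimpleGraph V) : Prop :=
  ∃ (a₁ a₂ a₃ b₁ b₂ b₃ : V) (P₁ : G.Walk a₁ b₁) (P₂ : G.Walk a₂ b₂) (P₃ : G.Walk a₃ b₃),
    G.Adj a₁ a₂ ∧ G.Adj a₁ a₃ ∧ G.Adj a₂ a₃ ∧
    G.Adj b₁ b₂ ∧ G.Adj b₁ b₃ ∧ G.Adj b₂ b₃ ∧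
    P₁.IsPath ∧ P₂.IsPath ∧ P₃.IsPath ∧
    1 ≤ P₁.length ∧ 1 ≤ P₂.length ∧ 1 ≤ P₃.length ∧
    (∀ v : V, v ∈ P₁.support → v ∈ P₂.support → False) ∧
    (∀ v : V, v ∈ P₁.support → v ∈ P₃.support → False) ∧
    (∀ v : V, v ∈ P₂.support → v ∈ P₃.support → False) ∧
    (∀ v : V, v ∈ P₁.support ∨ v ∈ P₂.support ∨ v ∈ P₃.support) ∧
    (∀ u v : V, G.Adj u v ↔
      s(u, v) ∈ P₁.edges ∨ s(u, v) ∈ P₂.edges ∨ s(u, v) ∈ P₃.edges ∨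
      s(u, v) = s(a₁, a₂) ∨ s(u, v) = s(a₁, a₃) ∨ s(u, v) = s(a₂, a₃) ∨
      s(u, v) = s(b₁, b₂) ∨ s(u, v) = s(b₁, b₃) ∨ s(u, v) = s(b₂, b₃))

/-- `G` is a long prism: a prism other than the complement of `C₆`, i.e. a prism in which at
least one of the three paths has length at least two. -/
def IsLongPrism (G : SimpleGraph V) : Prop :=
  ∃ (a₁ a₂ a₃ b₁ b₂ b₃ : V) (P₁ : G.Walk a₁ b₁) (P₂ : G.Walk a₂ b₂) (P₃ : G.Walk a₃ b₃),
    G.Adj a₁ a₂ ∧ G.Adj a₁ a₃ ∧ G.Adj a₂ a₃ ∧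
    G.Adj b₁ b₂ ∧ G.Adj b₁ b₃ ∧ G.Adj b₂ b₃ ∧
    P₁.IsPath ∧ P₂.IsPath ∧ P₃.IsPath ∧
    1 ≤ P₁.length ∧ 1 ≤ P₂.length ∧ 1 ≤ P₃.length ∧
    (2 ≤ P₁.length ∨ 2 ≤ P₂.length ∨ 2 ≤ P₃.length) ∧
    (∀ v : V, v ∈ P₁.support → v ∈ P₂.support → False) ∧
    (∀ v : V, v ∈ P₁.support → v ∈ P₃.support → False) ∧
    (∀ v : V, v ∈ P₂.support → v ∈ P₃.support → False) ∧
    (∀ v : V, v ∈ P₁.support ∨ v ∈ P₂.support ∨ v ∈ P₃.support) ∧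
    (∀ u v : V, G.Adj u v ↔
      s(u, v) ∈ P₁.edges ∨ s(u, v) ∈ P₂.edges ∨ s(u, v) ∈ P₃.edges ∨
      s(u, v) = s(a₁, a₂) ∨ s(u, v) = s(a₁, a₃) ∨ s(u, v) = s(a₂, a₃) ∨
      s(u, v) = s(b₁, b₂) ∨ s(u, v) = s(b₁, b₃) ∨ s(u, v) = s(b₂, b₃))

/-- `G` is a wheel: a hole (chordless cycle of length at least four) together with one
additional vertex having at least three neighbors on the hole. -/
def IsWheel (G : SimpleGraph V) : Prop :=
  ∃ (v x : V) (c : G.Walk x x),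
    c.IsCycle ∧ 4 ≤ c.length ∧ v ∉ c.support ∧
    (∀ u : V, u = v ∨ u ∈ c.support) ∧
    (∀ u w : V, u ∈ c.support → w ∈ c.support → G.Adj u w → s(u, w) ∈ c.edges) ∧
    3 ≤ {u : V | u ∈ c.support ∧ G.Adj v u}.ncard

/-- `G` is a broken wheel: a wheel in which the neighbors of the additional vertex induce a
disconnected subgraph of the hole. -/
def IsBrokenWheel (G : SimpleGraph V) : Prop :=
  ∃ (v x : V) (c : G.Walk x x),
    c.IsCycle ∧ 4 ≤ c.length ∧ v ∉ c.support ∧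
    (∀ u : V, u = v ∨ u ∈ c.support) ∧
    (∀ u w : V, u ∈ c.support → w ∈ c.support → G.Adj u w → s(u, w) ∈ c.edges) ∧
    3 ≤ {u : V | u ∈ c.support ∧ G.Adj v u}.ncard ∧
    ¬ (G.induce {u : V | u ∈ c.support ∧ G.Adj v u}).Connected

/-- `G` is diamond-free: it has no induced subgraph isomorphic to `K₄` minus an edge. -/
def DiamondFree (G : SimpleGraph V) : Prop :=
  ¬ ∃ a b c d : V, c ≠ d ∧ G.Adj a b ∧ G.Adj a c ∧ G.Adj a d ∧ G.Adj b c ∧ G.Adj b d ∧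
    ¬ G.Adj c d

/-- The short `n`-prism: two `n`-vertex cliques joined by a perfect matching. -/
def completePrism (n : ℕ) : SimpleGraph (Fin n ⊕ Fin n) :=
  SimpleGraph.fromRel (fun x y =>
    match x, y with
    | Sum.inl _, Sum.inl _ => True
    | Sum.inr _, Sum.inr _ => True
    | Sum.inl i, Sum.inr j => i = j
    | Sum.inr i, Sum.inl j => i = j)

/-- `G` is a complete prism, i.e. a short `n`-prism for some `n ≥ 3`. -/
def IsCompletePrism (G : SimpleGraph V) : Prop :=
  ∃ n : ℕ, 3 ≤ n ∧ Nonempty (G ≃g completePrism n)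

/-- `G` is a cycle. -/
def IsCycleGraph (G : SimpleGraph V) : Prop :=
  ∃ n : ℕ, 3 ≤ n ∧ Nonempty (G ≃g cycleGraph n)

/-- `G` is a complete graph. -/
def IsCompleteGraph (G : SimpleGraph V) : Prop :=
  ∀ u v : V, u ≠ v → G.Adj u v

/-- `G` has a clique-cutset. -/
def HasCliqueCutset (G : SimpleGraph V) : Prop :=
  ∃ K : Set V, G.IsClique K ∧ IsCutset G K




/-! ### Auxiliary lemmas -/

lemma walkInInduce {G : SimpleGraph V} {s : Set V} (h : (G.induce s).Connected)
    {x y : V} (hx : x ∈ s) (hy : y ∈ s) :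
    ∃ q : G.Walk x y, ∀ v ∈ q.support, v ∈ s := by
  obtain ⟨p⟩ := h.preconnected ⟨x, hx⟩ ⟨y, hy⟩
  refine ⟨p.map (SimpleGraph.Embedding.induce s).toHom, ?_⟩
  intro v hv
  replace hv : v ∈ (p.map (SimpleGraph.Embedding.induce s).toHom).support := hv
  rw [Walk.support_map, List.mem_map] at hv
  obtain ⟨⟨u, hu⟩, _, rfl⟩ := hv
  exact hu

lemma model_eq {G : SimpleGraph V} {H : SimpleGraph W} {X : W → Set V}
    (hM : IsIMModel G H X) {v : V} {u w : W} (hu : v ∈ X u) (hw : v ∈ X w) : u = w := by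
  by_contra h
  exact Set.disjoint_left.mp (hM.2.1 u w h) hu hw

lemma lift_walk {G : SimpleGraph V} {H : SimpleGraph W} {X : W → Set V}
    (hM : IsIMModel G H X) : ∀ {a b : W} (p : H.Walk a b) {α β : V},
    α ∈ X a → β ∈ X b →
    ∃ q : G.Walk α β, ∀ v ∈ q.support, ∃ w ∈ p.support, v ∈ X w := by
  intro a b p
  induction p with
  | nil =>
    intro α β hα hβ
    obtain ⟨q, hq⟩ := walkInInduce (hM.2.2.1 _) hα hβ
    exact ⟨q, fun v hv => ⟨_, Walk.start_mem_support _, hq v hv⟩⟩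
  | @cons a c b h p ih =>
    intro α β hα hβ
    obtain ⟨x, hx, y, hy, hxy⟩ := (hM.2.2.2 _ _ h.ne).mp h
    obtain ⟨q1, hq1⟩ := walkInInduce (hM.2.2.1 _) hα hx
    obtain ⟨q2, hq2⟩ := ih hy hβ
    refine ⟨q1.append (Walk.cons hxy q2), ?_⟩
    intro v hv
    rw [Walk.mem_support_append_iff] at hv
    rcases hv with hv | hv
    · exact ⟨a, Walk.start_mem_support _, hq1 v hv⟩
    · rw [Walk.support_cons, List.mem_cons] at hv
      rcases hv with rfl | hv
      · exact ⟨a, Walk.start_mem_support _, hx⟩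
      · obtain ⟨w, hw, hvw⟩ := hq2 v hv
        exact ⟨w, by rw [Walk.support_cons]; exact List.mem_cons_of_mem _ hw, hvw⟩

lemma project_walk {G : SimpleGraph V} {H : SimpleGraph W} {X : W → Set V}
    (hM : IsIMModel G H X) : ∀ {α β : V} (q : G.Walk α β) {a b : W},
    α ∈ X a → β ∈ X b → (∀ v ∈ q.support, ∃ w, v ∈ X w) →
    ∃ p : H.Walk a b, ∀ w ∈ p.support, ∃ v ∈ q.support, v ∈ X w := by
  intro α β q
  induction q with
  | nil =>
    intro a b hα hβ _
    have hab : a = b := model_eq hM hα hβ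
    subst hab
    exact ⟨Walk.nil, fun w hw => by
      rw [Walk.support_nil, List.mem_singleton] at hw
      exact ⟨_, Walk.start_mem_support _, hw ▸ hα⟩⟩
  | @cons α γ β hadj q ih =>
    intro a b hα hβ hsupp
    obtain ⟨c, hγ⟩ := hsupp γ
      (by rw [Walk.support_cons]; exact List.mem_cons_of_mem _ (Walk.start_mem_support _))
    obtain ⟨p', hp'⟩ := ih hγ hβ
      (fun v hv => hsupp v (by rw [Walk.support_cons]; exact List.mem_cons_of_mem _ hv))
    by_cases hac : a = c
    · subst hac
      refine ⟨p', fun w hw => ?_⟩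
      obtain ⟨v, hv, hvw⟩ := hp' w hw
      exact ⟨v, by rw [Walk.support_cons]; exact List.mem_cons_of_mem _ hv, hvw⟩
    · have hHadj : H.Adj a c := (hM.2.2.2 a c hac).mpr ⟨α, hα, γ, hγ, hadj⟩
      refine ⟨Walk.cons hHadj p', fun w hw => ?_⟩
      rw [Walk.support_cons, List.mem_cons] at hw
      rcases hw with rfl | hw
      · exact ⟨α, Walk.start_mem_support _, hα⟩
      · obtain ⟨v, hv, hvw⟩ := hp' w hw
        exact ⟨v, by rw [Walk.support_cons]; exact List.mem_cons_of_mem _ hv, hvw⟩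

lemma exists_minsep_aux [Finite V] (G : SimpleGraph V) (a b : V) :
    ∀ (n : ℕ) (S : Set V), S.ncard ≤ n → IsSep G a b S →
    ∃ T ⊆ S, IsMinSep G a b T := by
  intro n
  induction n with
  | zero =>
    intro S hcard hS
    have hSe : S = ∅ := Set.ncard_eq_zero (Set.toFinite S) |>.mp (Nat.le_zero.mp hcard)
    subst hSe
    exact ⟨∅, subset_rfl, hS, fun T hT => absurd rfl (hT.trans_le (Set.empty_subset T)).ne⟩
  | succ n ih =>
    intro S hcard hS
    by_cases h : ∃ T, T ⊂ S ∧ IsSep G a b T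
    · obtain ⟨T, hTS, hT⟩ := h
      have : T.ncard ≤ n := by
        have := Set.ncard_lt_ncard hTS (Set.toFinite S)
        omega
      obtain ⟨T', hT'T, hT'⟩ := ih T this hT
      exact ⟨T', hT'T.trans hTS.subset, hT'⟩
    · push_neg at h
      exact ⟨S, subset_rfl, hS, fun T hT hsep => h T hT hsep⟩

lemma exists_minsep [Finite V] {G : SimpleGraph V} {a b : V} {S : Set V}
    (hS : IsSep G a b S) : ∃ T ⊆ S, IsMinSep G a b T :=
  exists_minsep_aux G a b S.ncard S le_rfl hS

/-- Key lemma: `MemGk` is preserved under taking induced minors. -/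
lemma memGk_of_model {α β : Type} [Finite α] [Finite β] {G : SimpleGraph α}
    {H : SimpleGraph β} {X : β → Set α} (hG : MemGk k G) (hM : IsIMModel G H X) :
    MemGk k H := by
  intro S hSmin
  obtain ⟨a, b, hab, hnadj, hsep, hmin⟩ := hSmin
  obtain ⟨χ, hχ⟩ := hM.1 a
  obtain ⟨ψ, hψ⟩ := hM.1 b
  -- the "big" separator in G
  set T0 : Set α := (⋃ w ∈ S, X w) ∪ {v | ∀ w, v ∉ X w} with hT0
  have hmemT0 : ∀ v : α, v ∈ T0 ↔ ((∃ w ∈ S, v ∈ X w) ∨ ∀ w, v ∉ X w) := by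
    intro v; simp [hT0]
  have hXnotT0 : ∀ (w : β), w ∉ S → ∀ v ∈ X w, v ∉ T0 := by
    intro w hw v hv hvT0
    rcases (hmemT0 v).mp hvT0 with ⟨w', hw', hvw'⟩ | h
    · exact hw ((model_eq hM hv hvw') ▸ hw')
    · exact h w hv
  have hαT0 : χ ∉ T0 := hXnotT0 a hsep.1 χ hχ
  have hβT0 : ψ ∉ T0 := hXnotT0 b hsep.2.1 ψ hψ
  have hsepT0 : IsSep G χ ψ T0 := by
    refine ⟨hαT0, hβT0, ?_⟩
    rintro ⟨q, hq⟩
    obtain ⟨p, hp⟩ := project_walk hM q hχ hψ (fun v hv => by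
      by_contra h
      push_neg at h
      exact hq v hv ((hmemT0 v).mpr (Or.inr h)))
    refine hsep.2.2 ⟨p, fun w hw hwS => ?_⟩
    obtain ⟨v, hv, hvw⟩ := hp w hw
    exact hq v hv ((hmemT0 v).mpr (Or.inl ⟨w, hwS, hvw⟩))
  obtain ⟨T, hTT0, hTmin⟩ := exists_minsep hsepT0
  have hχψ : χ ≠ ψ := by
    intro h
    exact hab (model_eq hM hχ (h ▸ hψ))
  have hnadjG : ¬ G.Adj χ ψ := fun h => hnadj ((hM.2.2.2 a b hab).mpr ⟨χ, hχ, ψ, hψ, h⟩)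
  obtain ⟨f, hfcl, hfT⟩ := hG T ⟨χ, ψ, hχψ, hnadjG, hTmin⟩
  refine ⟨fun i => {w | w ∈ S ∧ (X w ∩ f i).Nonempty}, ?_, ?_⟩
  · intro i u hu w hw huw
    obtain ⟨p, hpX, hpf⟩ := hu.2
    obtain ⟨q, hqX, hqf⟩ := hw.2
    have hpq : p ≠ q := fun h => huw (model_eq hM hpX (h ▸ hqX))
    exact (hM.2.2.2 u w huw).mpr ⟨p, hpX, q, hqX, hfcl i hpf hqf hpq⟩
  · ext w
    simp only [Set.mem_iUnion, Set.mem_setOf_eq]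
    constructor
    · intro hwS
      have hwsub : S \ {w} ⊂ S := Set.sdiff_singleton_ssubset.mpr hwS
      have hnsep : ¬ IsSep H a b (S \ {w}) := hmin _ hwsub
      have hconn : ConnAvoid H (S \ {w}) a b := by
        by_contra h
        exact hnsep ⟨fun ha => hsep.1 ha.1, fun hb => hsep.2.1 hb.1, h⟩
      obtain ⟨p, hp⟩ := hconn
      obtain ⟨q, hq⟩ := lift_walk hM p hχ hψ
      -- q must meet T
      have : ∃ v ∈ q.support, v ∈ T := by
        by_contra h
        push_neg at h
        exact hTmin.1.2.2 ⟨q, h⟩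
      obtain ⟨v, hvq, hvT⟩ := this
      obtain ⟨u, hup, hvu⟩ := hq v hvq
      have hvT0 : v ∈ T0 := hTT0 hvT
      rcases (hmemT0 v).mp hvT0 with ⟨w', hw', hvw'⟩ | h
      · have huw' : u = w' := model_eq hM hvu hvw'
        have huw : u = w := by
          by_contra hne
          exact hp u hup ⟨huw' ▸ hw', hne⟩
        subst huw
        rw [hfT] at hvT
        obtain ⟨i, hi⟩ := Set.mem_iUnion.mp hvT
        exact ⟨i, hwS, v, hvu, hi⟩
      · exact absurd hvu (h u)
    · rintro ⟨i, hwS, _⟩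
      exact hwS

lemma walk_snd {G : SimpleGraph V} {x y : V} (p : G.Walk x y) (h : x ≠ y) :
    ∃ c, G.Adj x c ∧ c ∈ p.support := by
  cases p with
  | nil => exact absurd rfl h
  | cons hadj q =>
    exact ⟨_, hadj, by
      rw [Walk.support_cons]
      exact List.mem_cons_of_mem _ q.start_mem_support⟩

/-- for every `k ≥ 0`, the classes `𝒞_k` and `𝒢_k` are closed under
induced minors, and every graph in `𝒢_k` is `K_{2,k+1}`-induced-minor-free. -/
theorem statement_11 (k : ℕ) :
    IMClosed (Ckclass k) ∧ IMClosed (Gkclass k) ∧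
    (∀ (V : Type) [Finite V] (G : SimpleGraph V), MemGk k G →
      ¬ IsInducedMinor (completeBipartiteGraph (Fin 2) (Fin (k + 1))) G) := by
  refine ⟨?_, ?_, ?_⟩
  · -- C_k is closed under induced minors
    intro α _ G β _ H hG hIM
    obtain ⟨X, hM⟩ := hIM
    obtain ⟨f, hfcl, hfU⟩ := hG
    have hsel : ∀ w : β, ∃ (p : α) (i : Fin k), p ∈ X w ∧ p ∈ f i := by
      intro w
      obtain ⟨p, hp⟩ := hM.1 w
      have : p ∈ ⋃ i, f i := hfU ▸ Set.mem_univ p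
      obtain ⟨i, hi⟩ := Set.mem_iUnion.mp this
      exact ⟨p, i, hp, hi⟩
    choose v idx hv hf using hsel
    refine ⟨fun i => {w | idx w = i}, ?_, ?_⟩
    · intro i u hu w hw huw
      have hne : v u ≠ v w := fun h =>
        huw (by
          by_contra hne
          exact Set.disjoint_left.mp (hM.2.1 u w hne) (hv u) (h ▸ hv w))
      have : G.Adj (v u) (v w) := hfcl i (hu ▸ hf u) (hw ▸ hf w) hne
      exact (hM.2.2.2 u w huw).mpr ⟨v u, hv u, v w, hv w, this⟩
    · ext w
      simp only [Set.mem_univ, true_iff, Set.mem_iUnion, Set.mem_setOf_eq]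
      exact ⟨idx w, rfl⟩
  · -- G_k is closed under induced minors
    intro α _ G β _ H hG hIM
    obtain ⟨X, hM⟩ := hIM
    exact memGk_of_model hG hM
  · -- K_{2,k+1}-induced-minor-freeness
    intro V _ G hG hIM
    obtain ⟨X, hM⟩ := hIM
    have hK : MemGk k (completeBipartiteGraph (Fin 2) (Fin (k + 1))) :=
      memGk_of_model hG hM
    set K := completeBipartiteGraph (Fin 2) (Fin (k + 1)) with hKdef
    set a : Fin 2 ⊕ Fin (k + 1) := Sum.inl 0 with hadef
    set b : Fin 2 ⊕ Fin (k + 1) := Sum.inl 1 with hbdef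
    set S : Set (Fin 2 ⊕ Fin (k + 1)) := Set.range Sum.inr with hSdef
    have haS : a ∉ S := by simp [hadef, hSdef]
    have hbS : b ∉ S := by simp [hbdef, hSdef]
    have hadjlr : ∀ (i : Fin 2) (j : Fin (k + 1)), K.Adj (Sum.inl i) (Sum.inr j) := by
      intro i j; simp [hKdef]
    have hsep : IsSep K a b S := by
      refine ⟨haS, hbS, ?_⟩
      rintro ⟨p, hp⟩
      obtain ⟨c, hadj, hcsup⟩ := walk_snd p (by simp [hadef, hbdef] : a ≠ b)
      have hc : c ∈ S := by
        rcases c with i | j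
        · exfalso; simp [hKdef, hadef] at hadj
        · exact ⟨j, rfl⟩
      exact hp c hcsup hc
    have hminsep : IsMinSep K a b S := by
      refine ⟨hsep, ?_⟩
      rintro T hT ⟨haT, hbT, hconn⟩
      obtain ⟨x, hxS, hxT⟩ := Set.exists_of_ssubset hT
      obtain ⟨j, rfl⟩ := hxS
      refine hconn ⟨Walk.cons (hadjlr 0 j) (Walk.cons (hadjlr 1 j).symm Walk.nil), ?_⟩
      intro v hv
      simp only [Walk.support_cons, Walk.support_nil, List.mem_cons, List.mem_singleton] at hv
      rcases hv with rfl | rfl | rfl | h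
      · exact haT
      · exact hxT
      · exact hbT
      · exact absurd h (by simp)
    have hUoC := hK S ⟨a, b, by simp [hadef, hbdef], by simp [hKdef, hadef, hbdef], hminsep⟩
    obtain ⟨f, hfcl, hfS⟩ := hUoC
    have hsel : ∀ j : Fin (k + 1), ∃ i : Fin k, Sum.inr j ∈ f i := by
      intro j
      have : (Sum.inr j : Fin 2 ⊕ Fin (k + 1)) ∈ ⋃ i, f i := hfS ▸ ⟨j, rfl⟩
      exact Set.mem_iUnion.mp this
    choose idx hidx using hsel
    have hcard : Fintype.card (Fin k) < Fintype.card (Fin (k + 1)) := by simp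
    obtain ⟨j, j', hjj', heq⟩ := Fintype.exists_ne_map_eq_of_card_lt idx hcard
    have : K.Adj (Sum.inr j) (Sum.inr j') :=
      hfcl (idx j) (hidx j) (heq ▸ hidx j') (by simp [hjj'])
    simp [hKdef] at this

end PaperSep
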